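/- Let A be a subfield of a field B and let T = A + X·B[X]. For a polynomial f ∈ B[X]: f belongs to T and is irreducible in T if and only if f is irreducible in B[X] and its constant coefficient f(0) lies in A. -/

import Mathlib

/-- The polynomial composite `A + X·B[X]`: the subring of `B[X]` of polynomials
whose constant coefficient lies in `A`. -/
def Subring.composite {B : Type*} [CommRing B] (A : Subring B) : Subring (Polynomial B) where
  carrier := {f : Polynomial B | f.coeff 0 ∈ A}
  mul_mem' {f g} hf hg := by
    simp only [Set.mem_setOf_eq, Polynomial.mul_coeff_zero] at *
    exact mul_mem hf hg
  one_mem' := by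
    simp only [Set.mem_setOf_eq, Polynomial.coeff_one_zero]
    exact one_mem A
  add_mem' {f g} hf hg := by
    simp only [Set.mem_setOf_eq, Polynomial.coeff_add] at *
    exact add_mem hf hg
  zero_mem' := by
    simp only [Set.mem_setOf_eq, Polynomial.coeff_zero]
    exact zero_mem A
  neg_mem' {f} hf := by
    simp only [Set.mem_setOf_eq, Polynomial.coeff_neg] at *
    exact neg_mem hf

theorem Subring.mem_composite {B : Type*} [CommRing B] (A : Subring B) (f : Polynomial B) :
    f ∈ A.composite ↔ f.coeff 0 ∈ A := Iff.rfl

/-- For `A ⊆ B` fields and `T = A + X·B[X]`: a polynomial `f ∈ B[X]` lies in `T` and is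
irreducible in `T` iff `f` is irreducible in `B[X]` and its constant coefficient lies in `A`. -/
theorem composite_irreducible_iff_irreducible {B : Type*} [Field B] (A : Subfield B)
    (f : Polynomial B) :
    (∃ hf : f ∈ A.toSubring.composite, Irreducible (⟨f, hf⟩ : A.toSubring.composite)) ↔
      Irreducible f ∧ f.coeff 0 ∈ A := by
  have unit_iff : ∀ g : A.toSubring.composite, IsUnit g ↔ IsUnit (g : Polynomial B) := by
    intro g
    refine ⟨fun h => h.map (A.toSubring.composite).subtype, fun h => ?_⟩
    obtain ⟨b, hb, hbg⟩ := Polynomial.isUnit_iff.mp h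
    have hbA : b ∈ A := by
      have h2 := g.2
      rw [Subring.mem_composite, ← hbg, Polynomial.coeff_C_zero] at h2
      exact h2
    refine IsUnit.of_mul_eq_one (a := g) ⟨Polynomial.C b⁻¹, ?_⟩ ?_
    · show (Polynomial.C b⁻¹).coeff 0 ∈ A
      rw [Polynomial.coeff_C_zero]
      exact A.inv_mem hbA
    · apply Subtype.ext
      show (g : Polynomial B) * Polynomial.C b⁻¹ = 1
      rw [← hbg, ← Polynomial.C_mul, mul_inv_cancel₀ hb.ne_zero, Polynomial.C_1]
  constructor
  · rintro ⟨hf, hirr⟩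
    refine ⟨⟨fun h => hirr.not_isUnit ((unit_iff _).mpr h), ?_⟩, hf⟩
    intro g h hgh
    by_contra hcon
    push_neg at hcon
    obtain ⟨hg, hh⟩ := hcon
    have hf0 : f ≠ 0 := fun h0 => hirr.ne_zero (Subtype.ext h0)
    have hgne : g ≠ 0 := fun h0 => hf0 (by rw [hgh, h0, zero_mul])
    have hhne : h ≠ 0 := fun h0 => hf0 (by rw [hgh, h0, mul_zero])
    obtain ⟨c, hc, hcg, hch⟩ : ∃ c : B, c ≠ 0 ∧ (Polynomial.C c * g).coeff 0 ∈ A ∧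
        (Polynomial.C c⁻¹ * h).coeff 0 ∈ A := by
      by_cases hg0 : g.coeff 0 = 0
      · by_cases hh0 : h.coeff 0 = 0
        · exact ⟨1, one_ne_zero, by simp [Polynomial.mul_coeff_zero, hg0, A.zero_mem],
            by simp [Polynomial.mul_coeff_zero, hh0, A.zero_mem]⟩
        · refine ⟨h.coeff 0, hh0, by simp [Polynomial.mul_coeff_zero, hg0, A.zero_mem], ?_⟩
          rw [Polynomial.mul_coeff_zero, Polynomial.coeff_C_zero, inv_mul_cancel₀ hh0]
          exact A.one_mem
      · refine ⟨(g.coeff 0)⁻¹, inv_ne_zero hg0, ?_, ?_⟩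
        · rw [Polynomial.mul_coeff_zero, Polynomial.coeff_C_zero, inv_mul_cancel₀ hg0]
          exact A.one_mem
        · have heq : (Polynomial.C ((g.coeff 0)⁻¹)⁻¹ * h).coeff 0 = f.coeff 0 := by
            rw [hgh, Polynomial.mul_coeff_zero, Polynomial.mul_coeff_zero,
              Polynomial.coeff_C_zero, inv_inv]
          rw [heq]
          exact hf
    have hprod : f = (Polynomial.C c * g) * (Polynomial.C c⁻¹ * h) := by
      rw [mul_mul_mul_comm, ← Polynomial.C_mul, mul_inv_cancel₀ hc, Polynomial.C_1, one_mul, hgh]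
    have key := hirr.isUnit_or_isUnit (a := (⟨Polynomial.C c * g, hcg⟩ : A.toSubring.composite))
      (b := (⟨Polynomial.C c⁻¹ * h, hch⟩ : A.toSubring.composite)) (Subtype.ext hprod)
    rcases key with hk | hk
    · have := (unit_iff _).mp hk
      exact hg (IsUnit.mul_iff.mp this).2
    · have := (unit_iff _).mp hk
      exact hh (IsUnit.mul_iff.mp this).2
  · rintro ⟨hirr, hA⟩
    refine ⟨hA, ⟨fun h => hirr.not_isUnit ((unit_iff _).mp h), ?_⟩⟩
    rintro ⟨g, hg⟩ ⟨h, hh⟩ heq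
    have hfg : f = g * h := congrArg Subtype.val heq
    rcases hirr.isUnit_or_isUnit hfg with h1 | h1
    · exact Or.inl ((unit_iff _).mpr h1)
    · exact Or.inr ((unit_iff _).mpr h1)
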